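/- For 0 < α < 1, the function z ↦ ψ(z) - (e^z - 1) z^{-2-α} extends to an analytic function on the strip {w ∈ ℂ : |Im w| < 2π}. -/

import Mathlib

set_option maxHeartbeats 1000000


open Complex Real

def slit : Set ℂ := {z : ℂ | z.re ≤ 0 ∧ z.im = 0}

noncomputable def psi (α : ℝ) (z : ℂ) : ℂ :=
  (Complex.exp z - 1) *
    ∑' k : ℤ, (z + 2 * (k : ℂ) * (π : ℂ) * Complex.I) ^ (((-(2 + α) : ℝ)) : ℂ)

private lemma key_lb {ε : ℝ} (hε : 0 < ε) (hε2 : ε ≤ 2 * π) {w : ℂ}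
    (hw : |w.im| ≤ 2 * π - ε) {k : ℤ} (hk : k ≠ 0) :
    ε * |(k : ℝ)| ≤ ‖w + 2 * (k : ℂ) * (π : ℂ) * Complex.I‖ := by
  have h1 : (1:ℝ) ≤ |(k : ℝ)| := by
    rw [← Int.cast_abs]; exact_mod_cast Int.one_le_abs hk
  have him : (w + 2 * (k : ℂ) * (π : ℂ) * Complex.I).im = w.im + 2 * (k:ℝ) * π := by simp
  have h2 : |w.im + 2 * (k:ℝ) * π| ≤ ‖w + 2 * (k : ℂ) * (π : ℂ) * Complex.I‖ := by
    rw [← him]; exact Complex.abs_im_le_norm _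
  have h3 : |2 * (k:ℝ) * π| = 2 * π * |(k:ℝ)| := by
    rw [abs_mul, abs_mul, _root_.abs_of_nonneg Real.pi_pos.le,
      _root_.abs_of_nonneg (by norm_num : (0:ℝ) ≤ 2)]; ring
  have h4 : |2*(k:ℝ)*π| - |w.im| ≤ |w.im + 2*(k:ℝ)*π| := by
    have := abs_sub_abs_le_abs_sub (2*(k:ℝ)*π) (-w.im)
    simpa [add_comm, sub_neg_eq_add] using this
  nlinarith [abs_nonneg w.im]

theorem stmt2 (α : ℝ) (hα0 : 0 < α) (hα1 : α < 1) :
    ∃ g : ℂ → ℂ, DifferentiableOn ℂ g {w : ℂ | |w.im| < 2 * π} ∧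
      ∀ z : ℂ, z ∉ slit → |z.im| < 2 * π →
        g z = psi α z - (Complex.exp z - 1) * z ^ (((-(2 + α) : ℝ)) : ℂ) := by
  set c : ℂ := (((-(2 + α) : ℝ)) : ℂ) with hc
  set F : ℤ → ℂ → ℂ := fun k z => (z + 2 * (k : ℂ) * (π : ℂ) * Complex.I) ^ c with hF
  set S : Set ℤ := ({0}ᶜ : Set ℤ) with hS
  -- summable bound
  have hpow : (1:ℝ) < 2 + α := by linarith
  have hbound : ∀ {ε : ℝ}, 0 < ε →
      Summable (fun k : ℤ => (ε * |(k:ℝ)|) ^ (-(2+α)) ) := by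
    intro ε hε
    have := (Real.summable_abs_int_rpow hpow).mul_left (ε ^ (-(2+α)))
    refine this.congr fun k => ?_
    rw [← Real.mul_rpow hε.le (abs_nonneg _)]
  -- norm bound for terms
  have hnorm : ∀ {ε : ℝ}, 0 < ε → ε ≤ 2 * π → ∀ {w : ℂ}, |w.im| ≤ 2 * π - ε →
      ∀ {k : ℤ}, k ≠ 0 → ‖F k w‖ ≤ (ε * |(k:ℝ)|) ^ (-(2+α)) := by
    intro ε hε hε2 w hw k hk
    have h1 : (1:ℝ) ≤ |(k : ℝ)| := by
      rw [← Int.cast_abs]; exact_mod_cast Int.one_le_abs hk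
    have hpos : 0 < ε * |(k:ℝ)| := by positivity
    have hlb := key_lb hε hε2 hw hk
    have : ‖F k w‖ = ‖w + 2 * (k : ℂ) * (π : ℂ) * Complex.I‖ ^ (-(2+α)) := by
      rw [hF]; exact Complex.norm_cpow_real _ _
    rw [this]
    exact Real.rpow_le_rpow_of_nonpos hpos hlb (by linarith)
  -- nonvanishing imaginary part for k ≠ 0 on the strip
  have hmem : ∀ {w : ℂ}, |w.im| < 2 * π → ∀ {k : ℤ}, k ≠ 0 →
      (w + 2 * (k : ℂ) * (π : ℂ) * Complex.I) ∈ Complex.slitPlane := by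
    intro w hw k hk
    refine Or.inr ?_
    have h1 : (1:ℝ) ≤ |(k : ℝ)| := by
      rw [← Int.cast_abs]; exact_mod_cast Int.one_le_abs hk
    have him : (w + 2 * (k : ℂ) * (π : ℂ) * Complex.I).im = w.im + 2 * (k:ℝ) * π := by simp
    rw [him]
    intro h0
    have : |w.im| = |2 * (k:ℝ) * π| := by
      rw [show w.im = -(2*(k:ℝ)*π) by linarith, abs_neg]
    have h3 : |2 * (k:ℝ) * π| = 2 * π * |(k:ℝ)| := by
      rw [abs_mul, abs_mul, _root_.abs_of_nonneg Real.pi_pos.le,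
        _root_.abs_of_nonneg (by norm_num : (0:ℝ) ≤ 2)]; ring
    nlinarith [Real.pi_pos]
  refine ⟨fun z => (Complex.exp z - 1) * ∑' k : S, F k z, ?_, ?_⟩
  · intro z₀ hz₀
    simp only [Set.mem_setOf_eq] at hz₀
    set ε : ℝ := (2 * π - |z₀.im|) / 2 with hε
    have hεpos : 0 < ε := by simp only [hε]; linarith
    have hε2 : ε ≤ 2 * π := by simp only [hε]; nlinarith [abs_nonneg z₀.im]
    set U : Set ℂ := {w : ℂ | |w.im| < 2 * π - ε} with hU
    have hUopen : IsOpen U := isOpen_lt (Complex.continuous_im.abs) continuous_const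
    have hz₀U : z₀ ∈ U := by simp only [hU, Set.mem_setOf_eq, hε]; linarith
    have hdiff : DifferentiableOn ℂ (fun w : ℂ => ∑' k : S, F k w) U := by
      refine differentiableOn_tsum_of_summable_norm
        (u := fun k : S => (ε * |((k:ℤ):ℝ)|) ^ (-(2+α)))
        ((hbound hεpos).subtype S) (fun k => ?_) hUopen (fun k w hw => ?_)
      · intro w hw
        have hk : (k : ℤ) ≠ 0 := k.2
        have hw' : |w.im| < 2 * π := by
          simp only [hU, Set.mem_setOf_eq] at hw; linarith
        exact (((differentiableAt_id.add_const _).cpow (differentiableAt_const c)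
          (hmem hw' hk))).differentiableWithinAt
      · exact hnorm hεpos hε2 (le_of_lt hw) k.2
    exact ((Complex.differentiable_exp.differentiableAt.sub_const 1).mul
      (hdiff.differentiableAt (hUopen.mem_nhds hz₀U))).differentiableWithinAt
  · intro z hzslit hz
    set ε : ℝ := (2 * π - |z.im|) / 2 with hε
    have hεpos : 0 < ε := by simp only [hε]; linarith
    have hε2 : ε ≤ 2 * π := by simp only [hε]; nlinarith [abs_nonneg z.im]
    have hzle : |z.im| ≤ 2 * π - ε := by simp only [hε]; linarith
    have hsumS : Summable (fun k : S => F k z) := by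
      refine Summable.of_norm_bounded (g := fun k : S => (ε * |((k:ℤ):ℝ)|) ^ (-(2+α)))
        ((hbound hεpos).subtype S) (fun k => hnorm hεpos hε2 hzle k.2)
    have hsum0 : Summable (fun k : ({0} : Set ℤ) => F k z) :=
      (Set.finite_singleton (0:ℤ)).summable (fun k : ℤ => F k z)
    have hsplit := Summable.tsum_add_tsum_compl (f := fun k : ℤ => F k z) hsum0 hsumS
    have h0 : (∑' k : ({0} : Set ℤ), F k z) = F 0 z := tsum_singleton (0:ℤ) (fun k : ℤ => F k z)
    have hF0 : F 0 z = z ^ c := by simp [hF]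
    rw [h0, hF0] at hsplit
    unfold psi
    rw [← hsplit]
    ring
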